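/- Let (L, ε, ∧_ε, ∨_ε) be a canonical ℰ-lattice such that the group Aut(Fix ε) of lattice automorphisms of Fix ε is trivial. Then Aut_ℰ(L) is isomorphic, as a group, to the direct product ∏_{a ∈ Fix ε} S'([a]), where S'([a]) is the subgroup of the symmetric group on the class [a] consisting of the permutations of [a] fixing a. -/

import Mathlib

/-- A canonical ℰ-lattice: a set `L` with a map `eps : L → L` and two associative,
commutative binary operations satisfying `a ∧ a = a ∨ a = ε a`,
the absorption laws `a ∧ (a ∨ b) = a ∨ (a ∧ b) = ε a`, and (canonicity)
all meets and joins are fixed points of `eps`. -/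
structure CELattice (L : Type*) where
  eps : L → L
  meet : L → L → L
  join : L → L → L
  meet_assoc : ∀ a b c, meet a (meet b c) = meet (meet a b) c
  join_assoc : ∀ a b c, join a (join b c) = join (join a b) c
  meet_comm : ∀ a b, meet a b = meet b a
  join_comm : ∀ a b, join a b = join b a
  meet_self : ∀ a, meet a a = eps a
  join_self : ∀ a, join a a = eps a
  meet_absorb : ∀ a b, meet a (join a b) = eps a
  join_absorb : ∀ a b, join a (meet a b) = eps a
  meet_canonical : ∀ a b, eps (meet a b) = meet a b
  join_canonical : ∀ a b, eps (join a b) = join a b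

namespace CELattice

variable {L : Type*}

/-- The set of fixed points of `eps`. -/
def Fix (E : CELattice L) : Set L := {a | E.eps a = a}

/-- The class `[a] = {b | ε b = ε a}`. -/
def cls (E : CELattice L) (a : L) : Set L := {b | E.eps b = E.eps a}

/-- The fixed points of `eps`, as a type. -/
abbrev FixT (E : CELattice L) : Type _ := {a : L // E.eps a = a}

/-- An ℰ-lattice isomorphism: a bijection commuting with `eps` and preserving
meets and joins. -/
def IsEIso {L₁ L₂ : Type*} (E₁ : CELattice L₁) (E₂ : CELattice L₂) (f : L₁ → L₂) : Prop :=
  Function.Bijective f ∧ (∀ a, f (E₁.eps a) = E₂.eps (f a)) ∧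
    (∀ a b, f (E₁.meet a b) = E₂.meet (f a) (f b)) ∧
    (∀ a b, f (E₁.join a b) = E₂.join (f a) (f b))

end CELattice

namespace CELattice

variable {L : Type*}

/-- The group `Aut_ℰ(L)` of ℰ-lattice automorphisms of a canonical ℰ-lattice,
as a subgroup of the symmetric group on `L`. -/
def EAut (E : CELattice L) : Subgroup (Equiv.Perm L) where
  carrier := {f : Equiv.Perm L | (∀ a, f (E.eps a) = E.eps (f a)) ∧
    (∀ a b, f (E.meet a b) = E.meet (f a) (f b)) ∧
    (∀ a b, f (E.join a b) = E.join (f a) (f b))}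
  one_mem' := by simp
  mul_mem' := by
    rintro f g ⟨hf1, hf2, hf3⟩ ⟨hg1, hg2, hg3⟩
    refine ⟨fun a => ?_, fun a b => ?_, fun a b => ?_⟩ <;>
      simp [Equiv.Perm.mul_apply, hg1, hg2, hg3, hf1, hf2, hf3]
  inv_mem' := by
    rintro f ⟨hf1, hf2, hf3⟩
    refine ⟨fun a => ?_, fun a b => ?_, fun a b => ?_⟩ <;>
      (apply f.injective;
       simp [hf1, hf2, hf3, Equiv.Perm.coe_inv, Equiv.apply_symm_apply])

/-- The meet of two fixed points, as a fixed point (the lattice operation on `Fix ε`). -/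
def fixMeet (E : CELattice L) (a b : E.FixT) : E.FixT :=
  ⟨E.meet a.1 b.1, E.meet_canonical _ _⟩

/-- The join of two fixed points, as a fixed point (the lattice operation on `Fix ε`). -/
def fixJoin (E : CELattice L) (a b : E.FixT) : E.FixT :=
  ⟨E.join a.1 b.1, E.join_canonical _ _⟩

/-- The group `Aut(Fix ε)` of lattice automorphisms of the lattice of fixed points. -/
def AutFix (E : CELattice L) : Subgroup (Equiv.Perm E.FixT) where
  carrier := {σ : Equiv.Perm E.FixT | (∀ a b, σ (E.fixMeet a b) = E.fixMeet (σ a) (σ b)) ∧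
    (∀ a b, σ (E.fixJoin a b) = E.fixJoin (σ a) (σ b))}
  one_mem' := by simp
  mul_mem' := by
    rintro f g ⟨hf1, hf2⟩ ⟨hg1, hg2⟩
    refine ⟨fun a b => ?_, fun a b => ?_⟩ <;>
      simp [Equiv.Perm.mul_apply, hg1, hg2, hf1, hf2]
  inv_mem' := by
    rintro f ⟨hf1, hf2⟩
    refine ⟨fun a b => ?_, fun a b => ?_⟩ <;>
      (apply f.injective; simp [hf1, hf2, Equiv.Perm.coe_inv, Equiv.apply_symm_apply])

/-- `S'([a])`: the subgroup of the symmetric group on the class `[a]`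
consisting of the permutations fixing `a`. -/
def Sprime (E : CELattice L) (a : L) : Subgroup (Equiv.Perm {b : L // E.eps b = E.eps a}) where
  carrier := {σ | σ ⟨a, rfl⟩ = ⟨a, rfl⟩}
  one_mem' := by simp
  mul_mem' := by
    intro f g hf hg
    simp only [Set.mem_setOf_eq] at *
    simp [Equiv.Perm.mul_apply, hg, hf]
  inv_mem' := by
    intro f hf
    simp only [Set.mem_setOf_eq] at *
    rw [Equiv.Perm.inv_eq_iff_eq, hf]

end CELattice

namespace CELattice

variable {L : Type*} (E : CELattice L)

lemma eps_idem (a : L) : E.eps (E.eps a) = E.eps a := by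
  rw [← E.meet_self a, E.meet_canonical]

lemma meet_eps (a b : L) : E.meet (E.eps a) (E.eps b) = E.meet a b := by
  conv_lhs => rw [← E.meet_self a, ← E.meet_self b]
  have key : E.meet (E.meet a a) (E.meet b b) = E.meet (E.meet a b) (E.meet a b) := by
    rw [← E.meet_assoc, ← E.meet_assoc]
    congr 1
    rw [E.meet_assoc, E.meet_assoc, E.meet_comm a b]
  rw [key, E.meet_self, E.meet_canonical]

lemma join_eps (a b : L) : E.join (E.eps a) (E.eps b) = E.join a b := by
  conv_lhs => rw [← E.join_self a, ← E.join_self b]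
  have key : E.join (E.join a a) (E.join b b) = E.join (E.join a b) (E.join a b) := by
    rw [← E.join_assoc, ← E.join_assoc]
    congr 1
    rw [E.join_assoc, E.join_assoc, E.join_comm a b]
  rw [key, E.join_self, E.join_canonical]

/-- Glue a family of fiberwise permutations into a map on `L`. -/
def liftFam (σ : ∀ a : E.FixT, Equiv.Perm {b : L // E.eps b = E.eps a.1}) : L → L :=
  fun b => (σ ⟨E.eps b, E.eps_idem b⟩ ⟨b, (E.eps_idem b).symm⟩).1

lemma liftFam_spec (σ : ∀ a : E.FixT, Equiv.Perm {b : L // E.eps b = E.eps a.1})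
    (a : E.FixT) (x : {b : L // E.eps b = E.eps a.1}) :
    E.liftFam σ x.1 = (σ a x).1 := by
  obtain ⟨av, ha⟩ := a
  obtain ⟨xv, hx⟩ := x
  have h1 : E.eps xv = av := hx.trans ha
  subst h1
  rfl

lemma eps_liftFam (σ : ∀ a : E.FixT, Equiv.Perm {b : L // E.eps b = E.eps a.1}) (b : L) :
    E.eps (E.liftFam σ b) = E.eps b := by
  have h2 := (σ ⟨E.eps b, E.eps_idem b⟩ ⟨b, (E.eps_idem b).symm⟩).2
  exact h2.trans (E.eps_idem b)

lemma liftFam_inv (σ : ∀ a : E.FixT, Equiv.Perm {b : L // E.eps b = E.eps a.1}) (b : L) :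
    E.liftFam (fun a => (σ a)⁻¹) (E.liftFam σ b) = b := by
  set a : E.FixT := ⟨E.eps b, E.eps_idem b⟩ with ha
  have h1 : E.liftFam σ b = (σ a ⟨b, (E.eps_idem b).symm⟩).1 := rfl
  rw [h1, E.liftFam_spec (fun a => (σ a)⁻¹) a (σ a ⟨b, (E.eps_idem b).symm⟩)]
  simp

lemma liftFam_fix (σ : ∀ a : E.FixT, Equiv.Perm {b : L // E.eps b = E.eps a.1})
    (hσ : ∀ a : E.FixT, σ a ∈ E.Sprime a.1) (c : L) (hc : E.eps c = c) :
    E.liftFam σ c = c := by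
  have h1 := E.liftFam_spec σ ⟨c, hc⟩ ⟨c, rfl⟩
  have h2 : σ ⟨c, hc⟩ ⟨c, rfl⟩ = ⟨c, rfl⟩ := hσ ⟨c, hc⟩
  rw [h1, h2]

end CELattice

open CELattice in
/-- Corollary 1 (2.1): if the group of lattice automorphisms of `Fix ε` is trivial, then
`Aut_ℰ(L) ≅ ∏_{a ∈ Fix ε} S'([a])`. -/
theorem eaut_iso_of_trivial_autFix {L : Type*} [Nonempty L] (E : CELattice L)
    (h : ∀ σ : AutFix E, σ = 1) :
    Nonempty (EAut E ≃* ∀ a : E.FixT, Sprime E (a : L)) := by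
  -- Every E-automorphism fixes the fixed points of ε pointwise.
  have hfix : ∀ f : EAut E, ∀ c : L, E.eps c = c → f.1 c = c := by
    intro f c hc
    obtain ⟨f, hf1, hf2, hf3⟩ := f
    have hpred : ∀ x : L, E.eps x = x ↔ E.eps (f x) = f x := by
      intro x
      constructor
      · intro hx
        rw [← hf1, hx]
      · intro hx
        apply f.injective
        rw [hf1, hx]
    set σ : Equiv.Perm E.FixT := f.subtypePerm (fun x => (hpred x).symm) with hσdef
    have hmem : σ ∈ AutFix E := by
      constructor
      · intro a b
        apply Subtype.ext
        exact hf2 a.1 b.1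
      · intro a b
        apply Subtype.ext
        exact hf3 a.1 b.1
    have h1 : (⟨σ, hmem⟩ : AutFix E) = 1 := h _
    have h2 : σ = 1 := by
      simpa using congrArg Subtype.val h1
    have h3 := congrFun (congrArg (fun (g : Equiv.Perm E.FixT) => (g : E.FixT → E.FixT)) h2)
      ⟨c, hc⟩
    exact congrArg Subtype.val h3
  -- For an E-automorphism, ε (f x) = ε x.
  have heps : ∀ f : EAut E, ∀ x : L, E.eps (f.1 x) = E.eps x := by
    intro f x
    rw [← f.2.1 x, hfix f (E.eps x) (E.eps_idem x)]
  -- The restriction homomorphism.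
  let Φ : EAut E →* (∀ a : E.FixT, Sprime E (a : L)) :=
    { toFun := fun f => fun a =>
        ⟨(f.1.subtypePerm (p := fun b => E.eps b = E.eps (a : L))
            (fun x => by simp only [heps f x])),
         by
           apply Subtype.ext
           exact hfix f a.1 a.2⟩
      map_one' := by
        funext a
        apply Subtype.ext
        apply Equiv.ext
        intro x
        rfl
      map_mul' := by
        intro f g
        funext a
        apply Subtype.ext
        apply Equiv.ext
        intro x
        rfl }
  refine ⟨MulEquiv.ofBijective Φ ⟨?_, ?_⟩⟩
  · -- injectivity
    rw [injective_iff_map_eq_one]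
    intro f hf
    apply Subtype.ext
    apply Equiv.ext
    intro b
    have h1 : Φ f ⟨E.eps b, E.eps_idem b⟩ = 1 := congrFun hf _
    have h2 : (Φ f ⟨E.eps b, E.eps_idem b⟩).1 ⟨b, (E.eps_idem b).symm⟩
        = ⟨b, (E.eps_idem b).symm⟩ := by rw [h1]; rfl
    exact congrArg Subtype.val h2
  · -- surjectivity
    intro σ
    set σ' : ∀ a : E.FixT, Equiv.Perm {b : L // E.eps b = E.eps a.1} :=
      fun a => (σ a).1 with hσ'
    have hinvinv : E.liftFam σ' = E.liftFam (fun a => ((σ' a)⁻¹)⁻¹) := by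
      simp
    let g : Equiv.Perm L :=
      { toFun := E.liftFam σ'
        invFun := E.liftFam (fun a => (σ' a)⁻¹)
        left_inv := fun b => E.liftFam_inv σ' b
        right_inv := fun b => by
          have := E.liftFam_inv (fun a => (σ' a)⁻¹) b
          rw [← hinvinv] at this
          exact this }
    have gfix : ∀ c : L, E.eps c = c → E.liftFam σ' c = c :=
      E.liftFam_fix σ' (fun a => (σ a).2)
    have hgmem : g ∈ EAut E := by
      refine ⟨fun x => ?_, fun x y => ?_, fun x y => ?_⟩
      · show E.liftFam σ' (E.eps x) = E.eps (E.liftFam σ' x)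
        rw [E.eps_liftFam σ' x]
        exact gfix (E.eps x) (E.eps_idem x)
      · show E.liftFam σ' (E.meet x y) = E.meet (E.liftFam σ' x) (E.liftFam σ' y)
        rw [gfix (E.meet x y) (E.meet_canonical x y), ← E.meet_eps (E.liftFam σ' x),
          E.eps_liftFam, E.eps_liftFam, E.meet_eps]
      · show E.liftFam σ' (E.join x y) = E.join (E.liftFam σ' x) (E.liftFam σ' y)
        rw [gfix (E.join x y) (E.join_canonical x y), ← E.join_eps (E.liftFam σ' x),
          E.eps_liftFam, E.eps_liftFam, E.join_eps]
    refine ⟨⟨g, hgmem⟩, ?_⟩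
    funext a
    apply Subtype.ext
    apply Equiv.ext
    intro x
    apply Subtype.ext
    show g x.1 = (σ' a x).1
    exact E.liftFam_spec σ' a x
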